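/- Let s ≥ 1, let A be a real s×s matrix, b ∈ ℝ^s, and 𝟙 = (1,…,1)ᵀ ∈ ℝ^s, and let R(z) = 1 + z bᵀ(I − zA)⁻¹𝟙 (with A, b, 𝟙 regarded as complex via coercion), which is well defined and analytic on an open neighbourhood of 0 in ℂ. Then for every m ∈ ℕ, the Taylor polynomial of R at the point 0 of degree m+1 is exactly the polynomial z ↦ 1 + (bᵀ𝟙)z + (bᵀA𝟙)z² + ⋯ + (bᵀAᵐ𝟙)z^{m+1}; that is, the stability function R_{PC,m} of the block predictor–corrector method with m correction steps is the truncated Taylor series expansion of the corrector's stability function R about the origin, truncated at degree m+1. -/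

import Mathlib

open Matrix Finset
open scoped NNReal ENNReal

attribute [local instance] Matrix.linftyOpNormedRing Matrix.linftyOpNormedAlgebra

/-- Let `s ≥ 1`, `A` a real `s × s` matrix, `b ∈ ℝ^s`, `𝟙 = (1,…,1)ᵀ`, and
`R z = 1 + z bᵀ (I − z A)⁻¹ 𝟙` (with everything regarded as complex), which is
well defined and analytic on an open neighbourhood of `0` in `ℂ`.  Then for every
`m ∈ ℕ` the Taylor polynomial of `R` at `0` of degree `m + 1` is exactly
`z ↦ 1 + (bᵀ𝟙) z + (bᵀA𝟙) z² + ⋯ + (bᵀAᵐ𝟙) z^(m+1)`, the stability function of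
the block predictor–corrector method with `m` correction steps. -/
theorem stmt_0 (s : ℕ) (hs : 1 ≤ s) (A : Matrix (Fin s) (Fin s) ℝ) (b : Fin s → ℝ)
    (AC : Matrix (Fin s) (Fin s) ℂ) (hAC : AC = A.map (Complex.ofReal))
    (bC : Fin s → ℂ) (hbC : bC = fun i => (b i : ℂ))
    (R : ℂ → ℂ)
    (hR : R = fun z : ℂ => 1 + z * (bC ⬝ᵥ ((1 : Matrix (Fin s) (Fin s) ℂ) - z • AC)⁻¹ *ᵥ (fun _ => 1))) :
    (∀ᶠ z in nhds (0 : ℂ), IsUnit ((1 : Matrix (Fin s) (Fin s) ℂ) - z • AC)) ∧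
    AnalyticAt ℂ R 0 ∧
    ∀ m : ℕ, ∀ z : ℂ,
      (∑ n ∈ Finset.range (m + 2), (iteratedDeriv n R 0 / n.factorial) * z ^ n)
        = 1 + ∑ n ∈ Finset.range (m + 1),
            (bC ⬝ᵥ (AC ^ n) *ᵥ (fun _ => 1)) * z ^ (n + 1) := by
  classical
  set v : Fin s → ℂ := fun _ => 1 with hv
  -- the linear functional `M ↦ bᵀ M 𝟙`
  let L : Matrix (Fin s) (Fin s) ℂ →ₗ[ℂ] ℂ :=
    { toFun := fun M => bC ⬝ᵥ M *ᵥ v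
      map_add' := fun M N => by simp [Matrix.add_mulVec, dotProduct_add]
      map_smul' := fun t M => by
        simp [Matrix.smul_mulVec, dotProduct_smul] }
  let Lc : Matrix (Fin s) (Fin s) ℂ →L[ℂ] ℂ := LinearMap.toContinuousLinearMap L
  have hLc : ∀ M, Lc M = bC ⬝ᵥ M *ᵥ v := fun M => rfl
  -- coefficients
  set c : ℕ → ℂ := fun n => Nat.rec 1 (fun k _ => bC ⬝ᵥ (AC ^ k) *ᵥ v) n with hc
  have hc0 : c 0 = 1 := rfl
  have hcs : ∀ n, c (n + 1) = bC ⬝ᵥ (AC ^ n) *ᵥ v := fun n => rfl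
  set K : ℝ≥0 := ‖AC‖₊ + 1 with hK
  have hK1 : 1 ≤ K := le_add_self
  have hK0 : K ≠ 0 := by positivity
  set r : ℝ≥0 := (2 * K)⁻¹ with hr
  have hr0 : 0 < r := by positivity
  have hKr : (K : ℝ) * (r : ℝ) = 2⁻¹ := by
    rw [hr]
    push_cast
    field_simp
  have hsmall : ∀ z : ℂ, ‖z‖ < (r : ℝ) → ‖z • AC‖ < 1 := by
    intro z hz
    have h1 : ‖z • AC‖ = ‖z‖ * ‖AC‖ := norm_smul z AC
    have h2 : ‖AC‖ ≤ (K : ℝ) := by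
      rw [hK]; push_cast; simp [← norm_toNNReal]
    calc ‖z • AC‖ = ‖z‖ * ‖AC‖ := h1
      _ ≤ ‖z‖ * (K : ℝ) := by
          exact mul_le_mul_of_nonneg_left h2 (norm_nonneg z)
      _ < (r : ℝ) * (K : ℝ) := by
          apply mul_lt_mul_of_pos_right hz
          exact lt_of_lt_of_le one_pos (by exact_mod_cast hK1)
      _ = 2⁻¹ := by rw [mul_comm]; exact hKr
      _ < 1 := by norm_num
  have hunit : ∀ z : ℂ, ‖z • AC‖ < 1 →
      IsUnit ((1 : Matrix (Fin s) (Fin s) ℂ) - z • AC) :=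
    fun z h => ⟨Units.oneSub (z • AC) h, rfl⟩
  -- sum of the power series
  have hRsum : ∀ z : ℂ, ‖z‖ < (r : ℝ) → HasSum (fun n => c n * z ^ n) (R z) := by
    intro z hz
    have hsm := hsmall z hz
    have hgeo : HasSum (fun n => (z • AC) ^ n) (∑' n, (z • AC) ^ n) :=
      (summable_geometric_of_norm_lt_one hsm).hasSum
    have hinv : ((1 : Matrix (Fin s) (Fin s) ℂ) - z • AC)⁻¹ = ∑' n, (z • AC) ^ n :=
      Matrix.inv_eq_right_inv (mul_neg_geom_series _ hsm)
    have hL : HasSum (fun n => Lc ((z • AC) ^ n)) (Lc (∑' n, (z • AC) ^ n)) :=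
      hgeo.mapL Lc
    have hL' : HasSum (fun n => c (n + 1) * z ^ (n + 1))
        (z * Lc (∑' n, (z • AC) ^ n)) := by
      have := hL.mul_left z
      refine this.congr_fun fun n => ?_
      rw [smul_pow, hLc, hcs]
      rw [Matrix.smul_mulVec, dotProduct_smul, smul_eq_mul]
      ring
    have := (hasSum_nat_add_iff (f := fun n => c n * z ^ n) 1).mp hL'
    have hfin : z * Lc (∑' n, (z • AC) ^ n) + ∑ i ∈ Finset.range 1, c i * z ^ i
        = R z := by
      rw [hR]
      simp only [Finset.sum_range_one, hc0, pow_zero, mul_one, hinv, hLc]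
      ring
    rwa [hfin] at this
  -- the formal power series
  set p : FormalMultilinearSeries ℂ ℂ ℂ := FormalMultilinearSeries.ofScalars ℂ c with hp
  have hpn : ∀ (n : ℕ) (y : ℂ), p n (fun _ => y) = c n * y ^ n := by
    intro n y
    rw [hp, FormalMultilinearSeries.ofScalars_apply_eq]
    simp [smul_eq_mul]
  -- coefficient bound
  have hpow : ∀ n : ℕ, ‖AC ^ n‖ ≤ ‖(1 : Matrix (Fin s) (Fin s) ℂ)‖ * (K : ℝ) ^ n := by
    intro n
    induction n with
    | zero => rw [pow_zero, pow_zero, mul_one]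
    | succ n ih =>
        have h4 : ‖AC‖ ≤ (K : ℝ) := by rw [hK]; push_cast; simp [← norm_toNNReal]
        calc ‖AC ^ (n + 1)‖ = ‖AC ^ n * AC‖ := by rw [pow_succ]
          _ ≤ ‖AC ^ n‖ * ‖AC‖ := norm_mul_le _ _
          _ ≤ (‖(1 : Matrix (Fin s) (Fin s) ℂ)‖ * (K : ℝ) ^ n) * (K : ℝ) := by
              apply mul_le_mul ih h4 (norm_nonneg _)
              exact mul_nonneg (norm_nonneg _) (pow_nonneg K.2 n)
          _ = ‖(1 : Matrix (Fin s) (Fin s) ℂ)‖ * (K : ℝ) ^ (n + 1) := by ring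
  letI : Norm (Matrix (Fin s) (Fin s) ℂ →L[ℂ] ℂ) := ContinuousLinearMap.hasOpNorm
  set Cb : ℝ := max 1 (‖Lc‖ * ‖(1 : Matrix (Fin s) (Fin s) ℂ)‖) with hCb
  have hcb : ∀ n, ‖c n‖ ≤ Cb * (K : ℝ) ^ n := by
    intro n
    cases n with
    | zero =>
        rw [hc0, pow_zero, mul_one, norm_one]
        exact le_max_left _ _
    | succ n =>
        have h1 : ‖c (n + 1)‖ = ‖Lc (AC ^ n)‖ := by rw [hcs, hLc]
        have h2 : ‖Lc (AC ^ n)‖ ≤ ‖Lc‖ * ‖AC ^ n‖ := Lc.le_opNorm _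
        have h6 : ((K : ℝ)) ^ n ≤ (K : ℝ) ^ (n + 1) := by
          apply pow_le_pow_right₀ (by exact_mod_cast hK1)
          omega
        calc ‖c (n + 1)‖ = ‖Lc (AC ^ n)‖ := h1
          _ ≤ ‖Lc‖ * ‖AC ^ n‖ := h2
          _ ≤ ‖Lc‖ * (‖(1 : Matrix (Fin s) (Fin s) ℂ)‖ * (K : ℝ) ^ n) := by
              exact mul_le_mul_of_nonneg_left (hpow n) Lc.opNorm_nonneg
          _ = (‖Lc‖ * ‖(1 : Matrix (Fin s) (Fin s) ℂ)‖) * (K : ℝ) ^ n := by ring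
          _ ≤ Cb * (K : ℝ) ^ n := by
              apply mul_le_mul_of_nonneg_right (le_max_right _ _)
              exact pow_nonneg K.2 n
          _ ≤ Cb * (K : ℝ) ^ (n + 1) := by
              apply mul_le_mul_of_nonneg_left h6
              exact le_trans zero_le_one (le_max_left _ _)
  have hradius : (r : ℝ≥0∞) ≤ p.radius := by
    apply p.le_radius_of_bound Cb
    intro n
    have h1 : ‖p n‖ = ‖c n‖ := by
      rw [hp]; exact FormalMultilinearSeries.ofScalars_norm ℂ c n
    rw [h1]
    calc ‖c n‖ * (r : ℝ) ^ n ≤ (Cb * (K : ℝ) ^ n) * (r : ℝ) ^ n := by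
          apply mul_le_mul_of_nonneg_right (hcb n)
          exact pow_nonneg r.2 n
      _ = Cb * ((K : ℝ) * (r : ℝ)) ^ n := by ring
      _ = Cb * (2⁻¹ : ℝ) ^ n := by rw [hKr]
      _ ≤ Cb * 1 := by
          apply mul_le_mul_of_nonneg_left _ (le_trans zero_le_one (le_max_left _ _))
          exact pow_le_one₀ (by norm_num) (by norm_num)
      _ = Cb := mul_one _
  have hball : HasFPowerSeriesOnBall R p 0 (r : ℝ≥0∞) :=
    { r_le := hradius
      r_pos := by exact_mod_cast ENNReal.coe_pos.mpr hr0
      hasSum := by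
        intro y hy
        have hy' : ‖y‖ < (r : ℝ) := by
          simpa [Metric.mem_eball, edist_zero_right, enorm_eq_nnnorm, ← ENNReal.coe_lt_coe, ← coe_nnnorm] using hy
        have h := hRsum y hy'
        simp only [hpn, zero_add]
        exact h }
  refine ⟨?_, hball.analyticAt, ?_⟩
  · filter_upwards [Metric.ball_mem_nhds (0 : ℂ) (by exact_mod_cast hr0)] with z hz
    exact hunit z (hsmall z (by simpa [dist_eq_norm] using hz))
  · have hiter : ∀ n : ℕ, iteratedDeriv n R 0 / n.factorial = c n := by
      intro n
      have h1 := hball.factorial_smul (1 : ℂ) n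
      rw [hpn] at h1
      have h2 : iteratedDeriv n R 0 = (n.factorial : ℂ) * c n := by
        rw [iteratedDeriv_eq_iteratedFDeriv, ← h1]
        simp [nsmul_eq_mul]
      rw [h2, mul_div_cancel_left₀]
      exact_mod_cast n.factorial_ne_zero
    intro m z
    simp only [hiter]
    rw [Finset.sum_range_succ' (fun n => c n * z ^ n) (m + 1)]
    simp only [hcs, hc0, pow_zero, mul_one]
    rw [add_comm]
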